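/- Let m : ℝ⁴ → ℝ³ be twice continuously differentiable (ContDiff ℝ 2) with ‖m(x)‖ = 1 for all x ∈ ℝ⁴. Define the space-time vorticity components ω_{μν}(x) := ⟪m(x), ∂_μ m(x) × ∂_ν m(x)⟫ for μ, ν ∈ {0,1,2,3}. Then Bianchi's identity holds: for all σ, μ, ν ∈ {0,1,2,3} and all x ∈ ℝ⁴, ∂_σ ω_{μν}(x) + ∂_ν ω_{σμ}(x) + ∂_μ ω_{νσ}(x) = 0. -/

import Mathlib

open scoped RealInnerProductSpace

noncomputable section

/-- ℝ³ as a Euclidean space. -/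
abbrev E3 := EuclideanSpace ℝ (Fin 3)

/-- Space-time ℝ⁴ as a Euclidean space (coordinate 0 is time). -/
abbrev E4 := EuclideanSpace ℝ (Fin 4)

/-- Partial derivative in the `μ`-th standard coordinate direction of ℝ⁴. -/
noncomputable def pd4 {F : Type*} [NormedAddCommGroup F] [NormedSpace ℝ F]
    (μ : Fin 4) (f : E4 → F) (x : E4) : F :=
  fderiv ℝ f x (EuclideanSpace.single μ 1)

/-- Cross product on ℝ³. -/
noncomputable def cross3 (a b : E3) : E3 :=
  (WithLp.equiv 2 (Fin 3 → ℝ)).symm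
    (crossProduct ((WithLp.equiv 2 (Fin 3 → ℝ)) a) ((WithLp.equiv 2 (Fin 3 → ℝ)) b))

/-- The space-time vorticity `ω_{μν} = m · (∂_μ m × ∂_ν m)`. -/
noncomputable def omega (m : E4 → E3) (μ ν : Fin 4) (x : E4) : ℝ :=
  ⟪m x, cross3 (pd4 μ m x) (pd4 ν m x)⟫

noncomputable def crossLin : E3 →ₗ[ℝ] E3 →ₗ[ℝ] E3 :=
  ((((crossProduct (R := ℝ)).compl₂
      (WithLp.linearEquiv 2 ℝ (Fin 3 → ℝ)).toLinearMap).compr₂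
      (WithLp.linearEquiv 2 ℝ (Fin 3 → ℝ)).symm.toLinearMap).comp
      (WithLp.linearEquiv 2 ℝ (Fin 3 → ℝ)).toLinearMap)

noncomputable def crossL : E3 →L[ℝ] E3 →L[ℝ] E3 :=
  LinearMap.toContinuousLinearMap
    ((LinearMap.toContinuousLinearMap (E := E3) (F' := E3)).toLinearMap.comp crossLin)

theorem crossL_apply (a b : E3) : crossL a b = cross3 a b := rfl

theorem cross3_anticomm (a b : E3) : cross3 a b = - cross3 b a := by
  rw [cross3, cross3, ← cross_anticomm]; rfl

theorem inner_cross3_eq_det (u v w : E3) :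
    ⟪u, cross3 v w⟫ = Matrix.det ![(WithLp.equiv 2 (Fin 3 → ℝ)) u,
      (WithLp.equiv 2 (Fin 3 → ℝ)) v, (WithLp.equiv 2 (Fin 3 → ℝ)) w] := by
  rw [← triple_product_eq_det]
  simp [cross3, PiLp.inner_apply, dotProduct, mul_comm]

theorem triple_coplanar (a u v w : E3) (ha : a ≠ 0)
    (hu : ⟪a, u⟫ = 0) (hv : ⟪a, v⟫ = 0) (hw : ⟪a, w⟫ = 0) :
    ⟪u, cross3 v w⟫ = 0 := by
  rw [inner_cross3_eq_det]
  by_contra hdet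
  apply ha
  have h0 :
      Matrix.mulVec ![(WithLp.equiv 2 (Fin 3 → ℝ)) u, (WithLp.equiv 2 (Fin 3 → ℝ)) v,
      (WithLp.equiv 2 (Fin 3 → ℝ)) w] ((WithLp.equiv 2 (Fin 3 → ℝ)) a) = 0 := by
    simp only [PiLp.inner_apply, RCLike.inner_apply, conj_trivial] at hu hv hw
    funext i
    fin_cases i
    · simpa [Matrix.mulVec, dotProduct, mul_comm] using hu
    · simpa [Matrix.mulVec, dotProduct, mul_comm] using hv
    · simpa [Matrix.mulVec, dotProduct, mul_comm] using hw
  have h1 := Matrix.eq_zero_of_mulVec_eq_zero hdet h0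
  have h2 : (WithLp.equiv 2 (Fin 3 → ℝ)).symm ((WithLp.equiv 2 (Fin 3 → ℝ)) a) = 0 := by
    rw [h1]; rfl
  simpa using h2

abbrev e4 (μ : Fin 4) : E4 := EuclideanSpace.single μ 1

theorem hasFDerivAt_pd4 {m : E4 → E3} (hm : ContDiff ℝ 2 m) (μ : Fin 4) (x : E4) :
    HasFDerivAt (pd4 μ m) ((fderiv ℝ (fderiv ℝ m) x).flip (e4 μ)) x := by
  have hd2 : ContDiff ℝ 1 (fderiv ℝ m) := hm.fderiv_right (by norm_num)
  have hF2 : HasFDerivAt (fderiv ℝ m) (fderiv ℝ (fderiv ℝ m) x) x :=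
    ((hd2.differentiable one_ne_zero) x).hasFDerivAt
  have := hF2.clm_apply (hasFDerivAt_const (e4 μ) x)
  simp only [ContinuousLinearMap.comp_zero, zero_add] at this
  exact this

theorem hasFDerivAt_m {m : E4 → E3} (hm : ContDiff ℝ 2 m) (x : E4) :
    HasFDerivAt m (fderiv ℝ m x) x :=
  ((hm.differentiable two_ne_zero) x).hasFDerivAt

theorem pd4_omega {m : E4 → E3} (hm : ContDiff ℝ 2 m) (μ ν σ : Fin 4) (x : E4) :
    pd4 σ (omega m μ ν) x
      = ⟪pd4 σ m x, cross3 (pd4 μ m x) (pd4 ν m x)⟫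
        + ⟪m x, cross3 (fderiv ℝ (fderiv ℝ m) x (e4 σ) (e4 μ)) (pd4 ν m x)⟫
        + ⟪m x, cross3 (pd4 μ m x) (fderiv ℝ (fderiv ℝ m) x (e4 σ) (e4 ν))⟫ := by
  set F2 := fderiv ℝ (fderiv ℝ m) x with hF2
  have hpμ := hasFDerivAt_pd4 hm μ x
  have hpν := hasFDerivAt_pd4 hm ν x
  have hc : HasFDerivAt (fun y => crossL (pd4 μ m y)) (crossL.comp (F2.flip (e4 μ))) x :=
    crossL.hasFDerivAt.comp x hpμ
  have hcr := hc.clm_apply hpν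
  have hω := (hasFDerivAt_m hm x).inner ℝ hcr
  have heq : omega m μ ν = fun y => ⟪m y, crossL (pd4 μ m y) (pd4 ν m y)⟫ := by
    funext y; rw [omega, crossL_apply]
  rw [pd4, heq, hω.fderiv]
  simp only [fderivInnerCLM_apply, ContinuousLinearMap.comp_apply,
    ContinuousLinearMap.prod_apply, ContinuousLinearMap.add_apply,
    ContinuousLinearMap.flip_apply, crossL_apply, inner_add_right]
  simp only [pd4, e4]
  ring

theorem inner_m_pd4 {m : E4 → E3} (hm : ContDiff ℝ 2 m)
    (hunit : ∀ x, ‖m x‖ = 1) (μ : Fin 4) (x : E4) : ⟪m x, pd4 μ m x⟫ = 0 := by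
  have hd := (hasFDerivAt_m hm x).inner ℝ (hasFDerivAt_m hm x)
  have heq : (fun y => ⟪m y, m y⟫) = fun _ : E4 => (1 : ℝ) := by
    funext y
    rw [real_inner_self_eq_norm_sq, hunit y]; norm_num
  have h0 : fderiv ℝ (fun y => ⟪m y, m y⟫) x = 0 := by
    rw [heq]; exact fderiv_const_apply 1
  have h1 := hd.fderiv
  rw [h0] at h1
  have h2 := congrArg (fun L : E4 →L[ℝ] ℝ => L (e4 μ)) h1.symm
  simp only [fderivInnerCLM_apply, ContinuousLinearMap.comp_apply,
    ContinuousLinearMap.prod_apply, ContinuousLinearMap.zero_apply] at h2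
  have h3 : ⟪m x, pd4 μ m x⟫ + ⟪pd4 μ m x, m x⟫ = 0 := by
    simpa [pd4] using h2
  have h4 := real_inner_comm (pd4 μ m x) (m x)
  linarith

theorem tri_swap (a u v : E3) : ⟪a, cross3 u v⟫ + ⟪a, cross3 v u⟫ = 0 := by
  rw [cross3_anticomm u v]; simp


/-- Bianchi's identity for the space-time vorticity of a unit-length field. -/
theorem bianchi_identity (m : E4 → E3) (hm : ContDiff ℝ 2 m)
    (hunit : ∀ x, ‖m x‖ = 1) (σ μ ν : Fin 4) (x : E4) :
    pd4 σ (omega m μ ν) x + pd4 ν (omega m σ μ) x + pd4 μ (omega m ν σ) x = 0 := by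
  have ha : m x ≠ 0 := by
    intro h; have := hunit x; rw [h] at this; simp at this
  have hperp : ∀ τ, ⟪m x, pd4 τ m x⟫ = 0 := fun τ => inner_m_pd4 hm hunit τ x
  have hsym : ∀ v w : E4, fderiv ℝ (fderiv ℝ m) x v w = fderiv ℝ (fderiv ℝ m) x w v :=
    (hm.contDiffAt.isSymmSndFDerivAt (by simp)).eq
  rw [pd4_omega hm μ ν σ x, pd4_omega hm σ μ ν x, pd4_omega hm ν σ μ x]
  rw [triple_coplanar (m x) _ _ _ ha (hperp σ) (hperp μ) (hperp ν),
      triple_coplanar (m x) _ _ _ ha (hperp ν) (hperp σ) (hperp μ),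
      triple_coplanar (m x) _ _ _ ha (hperp μ) (hperp ν) (hperp σ)]
  rw [hsym (e4 ν) (e4 σ), hsym (e4 μ) (e4 ν), hsym (e4 μ) (e4 σ)]
  linarith [tri_swap (m x) (fderiv ℝ (fderiv ℝ m) x (e4 σ) (e4 μ)) (pd4 ν m x),
    tri_swap (m x) (pd4 μ m x) (fderiv ℝ (fderiv ℝ m) x (e4 σ) (e4 ν)),
    tri_swap (m x) (pd4 σ m x) (fderiv ℝ (fderiv ℝ m) x (e4 ν) (e4 μ))]
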